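/- Let h : X → {0,…,d} be any surjective map and p ∈ D_d. Define P^h(p) = { f ∈ F_d : ∑_{x ∈ h^{−1}(y)} f(x) = p_y for every y ∈ {0,…,d} }. Then P^h(p) equals the convex hull, taken in ℝ^X, of the finite set of pmfs f^τ, where τ ranges over all maps τ : {0,…,d} → X with h(τ(y)) = y for all y (such τ are injective), and f^τ is defined by f^τ(τ(y)) = p_y for y = 0,…,d and f^τ(x) = 0 for x outside the range of τ. -/
import Mathlib


open Finset MeasureTheory Real

noncomputable section

/-- Weight of a binary vector: number of ones. -/
def wt {d : ℕ} (x : Fin d → Bool) : ℕ := (Finset.univ.filter (fun i => x i = true)).card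

/-- The set `F_d` of `d`-variate Bernoulli pmfs. -/
def Fd (d : ℕ) : Set ((Fin d → Bool) → ℝ) :=
  {f | (∀ x, 0 ≤ f x) ∧ ∑ x, f x = 1}

/-- The simplex `D_d` of pmfs on `{0,…,d}`. -/
def Dd (d : ℕ) : Set (Fin (d + 1) → ℝ) :=
  {p | (∀ k, 0 ≤ p k) ∧ ∑ k, p k = 1}

/-- The pmf of the sum of the coordinates: `s(f)_k = ∑_{x : w(x)=k} f(x)`. -/
def sumPmf {d : ℕ} (f : (Fin d → Bool) → ℝ) : Fin (d + 1) → ℝ :=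
  fun k => ∑ x ∈ Finset.univ.filter (fun x : Fin d → Bool => wt x = (k : ℕ)), f x

/-- `P(p) = { f ∈ F_d : s(f) = p }`. -/
def Pp (d : ℕ) (p : Fin (d + 1) → ℝ) : Set ((Fin d → Bool) → ℝ) :=
  {f | f ∈ Fd d ∧ sumPmf f = p}

/-- A selection: `σ(k)` is a binary vector of weight `k` for each `k`. -/
def IsSelection {d : ℕ} (σ : Fin (d + 1) → (Fin d → Bool)) : Prop :=
  ∀ k, wt (σ k) = (k : ℕ)

/-- The extremal pmf `f^σ`: mass `p_k` at `σ(k)`, zero elsewhere. -/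
def extPmf {d : ℕ} (p : Fin (d + 1) → ℝ) (σ : Fin (d + 1) → (Fin d → Bool)) :
    (Fin d → Bool) → ℝ :=
  fun x => ∑ k, if σ k = x then p k else 0

/-- generalization to an arbitrary surjection `h : X → {0,…,d}`:
`P^h(p) = { f ∈ F_d : ∑_{x ∈ h⁻¹(y)} f(x) = p_y ∀ y }` is the convex hull of the pmfs
`f^τ` for sections `τ` of `h`. -/
theorem polytope_general_map (d : ℕ) (hd : 1 ≤ d)
    (h : (Fin d → Bool) → Fin (d + 1)) (hh : Function.Surjective h)
    (p : Fin (d + 1) → ℝ) (hp : p ∈ Dd d) :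
    {f | f ∈ Fd d ∧ ∀ y : Fin (d + 1),
        ∑ x ∈ Finset.univ.filter (fun x : Fin d → Bool => h x = y), f x = p y} =
      convexHull ℝ
        {g | ∃ τ : Fin (d + 1) → (Fin d → Bool), (∀ y, h (τ y) = y) ∧
          g = fun x => ∑ y, if τ y = x then p y else 0} := by
  classical
  obtain ⟨hp0, hp1⟩ := hp
  set sgen : Set ((Fin d → Bool) → ℝ) :=
    {g | ∃ τ : Fin (d + 1) → (Fin d → Bool), (∀ y, h (τ y) = y) ∧
      g = fun x => ∑ y, if τ y = x then p y else 0} with hsgen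
  -- the generator pmfs lie in the target set
  have hsub : sgen ⊆ {f | f ∈ Fd d ∧ ∀ y : Fin (d + 1),
      ∑ x ∈ Finset.univ.filter (fun x : Fin d → Bool => h x = y), f x = p y} := by
    rintro g ⟨τ, hτ, rfl⟩
    refine ⟨⟨fun x => Finset.sum_nonneg (fun y _ => by split; exacts [hp0 y, le_rfl]), ?_⟩,
      fun y0 => ?_⟩
    · rw [Finset.sum_comm]
      have h1 : ∀ y : Fin (d + 1), ∑ x : Fin d → Bool, (if τ y = x then p y else 0) = p y := by
        intro y; rw [Finset.sum_ite_eq]; simp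
      rw [Finset.sum_congr rfl (fun y _ => h1 y), hp1]
    · rw [Finset.sum_comm]
      have h1 : ∀ y : Fin (d + 1),
          ∑ x ∈ Finset.univ.filter (fun x : Fin d → Bool => h x = y0),
            (if τ y = x then p y else 0) = if y = y0 then p y else 0 := by
        intro y
        rw [Finset.sum_ite_eq]
        simp [hτ y]
      rw [Finset.sum_congr rfl (fun y _ => h1 y), Finset.sum_ite_eq' Finset.univ y0 p]
      simp
  -- the target set is convex
  have hconv : Convex ℝ {f | f ∈ Fd d ∧ ∀ y : Fin (d + 1),
      ∑ x ∈ Finset.univ.filter (fun x : Fin d → Bool => h x = y), f x = p y} := by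
    rintro f ⟨⟨hf0, hf1⟩, hfy⟩ g ⟨⟨hg0, hg1⟩, hgy⟩ a b ha hb hab
    refine ⟨⟨fun x => ?_, ?_⟩, fun y => ?_⟩
    · have : (a • f + b • g) x = a * f x + b * g x := by
        simp [smul_eq_mul]
      rw [this]
      exact add_nonneg (mul_nonneg ha (hf0 x)) (mul_nonneg hb (hg0 x))
    · have : ∑ x, (a • f + b • g) x = a * (∑ x, f x) + b * (∑ x, g x) := by
        simp [Finset.sum_add_distrib, Finset.mul_sum, smul_eq_mul]
      rw [this, hf1, hg1, mul_one, mul_one, hab]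
    · have : ∑ x ∈ Finset.univ.filter (fun x : Fin d → Bool => h x = y), (a • f + b • g) x
          = a * (∑ x ∈ Finset.univ.filter (fun x : Fin d → Bool => h x = y), f x)
            + b * (∑ x ∈ Finset.univ.filter (fun x : Fin d → Bool => h x = y), g x) := by
        simp [Finset.sum_add_distrib, Finset.mul_sum, smul_eq_mul]
      rw [this, hfy y, hgy y, ← add_mul, hab, one_mul]
  apply Set.eq_of_subset_of_subset
  swap
  · exact convexHull_min hsub hconv
  -- hard direction
  rintro f ⟨⟨hf0, hf1⟩, hfib⟩
  choose σ₀ hσ₀ using hh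
  set q : Fin (d + 1) → (Fin d → Bool) → ℝ :=
    fun y x => if h x = y then (if p y = 0 then (if x = σ₀ y then 1 else 0) else f x / p y)
      else 0 with hqdef
  have hq0 : ∀ y x, 0 ≤ q y x := by
    intro y x
    simp only [hqdef]
    split_ifs <;> first
      | exact le_refl 0
      | exact zero_le_one
      | exact div_nonneg (hf0 x) (hp0 y)
  have hqz : ∀ y x, h x ≠ y → q y x = 0 := by
    intro y x hxy; simp [hqdef, hxy]
  have hqsum : ∀ y, ∑ x, q y x = 1 := by
    intro y
    by_cases hy : p y = 0
    · have h1 : ∀ x, q y x = if x = σ₀ y then 1 else 0 := by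
        intro x
        by_cases hx : x = σ₀ y
        · subst hx; simp [hqdef, hσ₀ y, hy]
        · simp [hqdef, hy, hx]
      rw [Finset.sum_congr rfl (fun x _ => h1 x), Finset.sum_ite_eq' Finset.univ (σ₀ y)]
      simp
    · have h1 : ∑ x, q y x
          = (∑ x ∈ Finset.univ.filter (fun x : Fin d → Bool => h x = y), f x) / p y := by
        rw [Finset.sum_div, Finset.sum_filter]
        refine Finset.sum_congr rfl (fun x _ => ?_)
        simp [hqdef, hy]
      rw [h1, hfib y, div_self hy]
  have hqfx : ∀ x, p (h x) * q (h x) x = f x := by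
    intro x
    by_cases hpx : p (h x) = 0
    · have hle : f x ≤ ∑ z ∈ Finset.univ.filter (fun z : Fin d → Bool => h z = h x), f z :=
        Finset.single_le_sum (fun z _ => hf0 z) (by simp)
      rw [hfib (h x), hpx] at hle
      rw [hpx, zero_mul, (le_antisymm hle (hf0 x)).symm]
    · have : q (h x) x = f x / p (h x) := by simp [hqdef, hpx]
      rw [this, mul_comm, div_mul_cancel₀ _ hpx]
  -- weights
  set w : ((Fin (d + 1) → (Fin d → Bool))) → ℝ := fun τ => ∏ y, q y (τ y) with hwdef
  have hw0 : ∀ τ, 0 ≤ w τ := fun τ => Finset.prod_nonneg (fun y _ => hq0 y (τ y))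
  have hwuniv : ∑ τ : Fin (d + 1) → (Fin d → Bool), w τ = 1 := by
    have : ∏ y : Fin (d + 1), ∑ x : Fin d → Bool, q y x
        = ∑ τ : Fin (d + 1) → (Fin d → Bool), w τ := by
      rw [Finset.prod_univ_sum, Fintype.piFinset_univ]
    rw [← this, Finset.prod_congr rfl (fun y _ => hqsum y), Finset.prod_const_one]
  -- the sum over all τ with fixed value x at coordinate y
  have hfix : ∀ (y : Fin (d + 1)) (x : Fin d → Bool),
      ∑ τ : Fin (d + 1) → (Fin d → Bool), (if τ y = x then (1 : ℝ) else 0) * w τ = q y x := by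
    intro y x
    have h1 : ∀ τ : Fin (d + 1) → (Fin d → Bool),
        (if τ y = x then (1 : ℝ) else 0) * w τ
          = ∏ y', (if y' = y then (if τ y' = x then q y' (τ y') else 0) else q y' (τ y')) := by
      intro τ
      by_cases hτ : τ y = x
      · rw [if_pos hτ, one_mul, hwdef]
        refine Finset.prod_congr rfl (fun y' _ => ?_)
        by_cases hy' : y' = y
        · subst hy'; simp [hτ]
        · simp [hy']
      · rw [if_neg hτ, zero_mul]
        symm
        apply Finset.prod_eq_zero (Finset.mem_univ y)
        simp [hτ]
    rw [Finset.sum_congr rfl (fun τ _ => h1 τ)]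
    have h2 : ∏ y' : Fin (d + 1),
        ∑ z : Fin d → Bool, (if y' = y then (if z = x then q y' z else 0) else q y' z)
        = ∑ τ : Fin (d + 1) → (Fin d → Bool),
            ∏ y', (if y' = y then (if τ y' = x then q y' (τ y') else 0) else q y' (τ y')) := by
      rw [Finset.prod_univ_sum, Fintype.piFinset_univ]
    rw [← h2]
    have h3 : ∀ y' : Fin (d + 1),
        (∑ z : Fin d → Bool, (if y' = y then (if z = x then q y' z else 0) else q y' z))
          = if y' = y then q y x else 1 := by
      intro y'
      by_cases hy' : y' = y
      · subst hy'
        simp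
      · simp only [if_neg hy']
        exact hqsum y'
    rw [Finset.prod_congr rfl (fun y' _ => h3 y'), Finset.prod_ite_eq' Finset.univ y]
    simp
  -- representation of f
  set g : (Fin (d + 1) → (Fin d → Bool)) → ((Fin d → Bool) → ℝ) :=
    fun τ => fun x => ∑ y, if τ y = x then p y else 0 with hgdef
  have hrep : ∀ x, ∑ τ : Fin (d + 1) → (Fin d → Bool), w τ * g τ x = f x := by
    intro x
    have h1 : ∀ τ : Fin (d + 1) → (Fin d → Bool),
        w τ * g τ x = ∑ y, p y * ((if τ y = x then (1 : ℝ) else 0) * w τ) := by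
      intro τ
      rw [hgdef]
      simp only []
      rw [Finset.mul_sum]
      refine Finset.sum_congr rfl (fun y _ => ?_)
      by_cases hτ : τ y = x <;> simp [hτ] <;> ring
    rw [Finset.sum_congr rfl (fun τ _ => h1 τ), Finset.sum_comm]
    have h2 : ∀ y : Fin (d + 1),
        ∑ τ : Fin (d + 1) → (Fin d → Bool), p y * ((if τ y = x then (1 : ℝ) else 0) * w τ)
          = p y * q y x := by
      intro y; rw [← Finset.mul_sum, hfix y x]
    rw [Finset.sum_congr rfl (fun y _ => h2 y)]
    have h3 : ∑ y : Fin (d + 1), p y * q y x = p (h x) * q (h x) x := by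
      apply Finset.sum_eq_single (h x)
      · intro y _ hy
        rw [hqz y x (fun hc => hy hc.symm), mul_zero]
      · intro hc; exact absurd (Finset.mem_univ _) hc
    rw [h3, hqfx x]
  -- restrict to sections
  set S : Finset (Fin (d + 1) → (Fin d → Bool)) :=
    Finset.univ.filter (fun τ => ∀ y, h (τ y) = y) with hSdef
  have hwS : ∀ τ, τ ∉ S → w τ = 0 := by
    intro τ hτ
    rw [hSdef, Finset.mem_filter] at hτ
    push_neg at hτ
    obtain ⟨y, hy⟩ := hτ (Finset.mem_univ τ)
    exact Finset.prod_eq_zero (Finset.mem_univ y) (hqz y (τ y) hy)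
  have hsumS : ∑ τ ∈ S, w τ = 1 := by
    rw [Finset.sum_subset (Finset.subset_univ S) (fun τ _ hτ => hwS τ hτ), hwuniv]
  have hfeq : f = S.centerMass w g := by
    rw [Finset.centerMass_eq_of_sum_1 S g hsumS]
    funext x
    rw [Finset.sum_apply]
    have : ∀ τ ∈ S, (w τ • g τ) x = w τ * g τ x := by
      intro τ _; simp [smul_eq_mul]
    rw [Finset.sum_congr rfl this,
      Finset.sum_subset (Finset.subset_univ S)
        (fun τ _ hτ => by rw [hwS τ hτ, zero_mul]), hrep x]
  rw [hfeq]
  refine Finset.centerMass_mem_convexHull S (fun τ _ => hw0 τ) ?_ (fun τ hτ => ?_)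
  · rw [hsumS]; norm_num
  · rw [hSdef, Finset.mem_filter] at hτ
    exact ⟨τ, hτ.2, rfl⟩
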